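/- Fix n ≥ 1 and for each k ∈ {1,...,n} a function r_k : {0,1} × {0,1} → ℝ with 0 < r_k(a, z) < 1 for all a, z, r_k(0,z) + r_k(1,z) = 1 for each z, and r_k(1,0) ≠ r_k(1,1). Let R(a, z) = Π_{k=1}^n r_k(a_k, z_k) and, for a pmf μ on {0,1}^n, let (Rμ)(a) = Σ_z R(a, z)μ(z) (which is again a pmf with strictly positive entries). Fix a pmf μ* on {0,1}^n and define F(μ) = Σ_{a ∈ {0,1}^n} (Rμ*)(a) · log((Rμ*)(a) / (Rμ)(a)) for pmfs μ. Then F(μ) ≥ 0 for every pmf μ, and F(μ) = 0 if and only if μ = μ*; hence μ* is the unique minimizer of the population-level KL moment-recovery objective over the probability simplex. -/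

import Mathlib

open Finset

lemma gibbs_aux {α : Type*} [Fintype α] (p q : α → ℝ)
    (hp : ∀ a, 0 < p a) (hq : ∀ a, 0 < q a)
    (hps : ∑ a, p a = 1) (hqs : ∑ a, q a = 1) :
    0 ≤ ∑ a, p a * Real.log (p a / q a) ∧
      ((∑ a, p a * Real.log (p a / q a)) = 0 → ∀ a, q a = p a) := by
  have h2 : ∀ a : α, Real.log (q a / p a) = - Real.log (p a / q a) := by
    intro a; rw [← Real.log_inv, inv_div]
  have h3 : ∀ a : α, p a * (q a / p a - 1) = q a - p a := by
    intro a; rw [mul_sub, mul_div_cancel₀ _ (hp a).ne', mul_one]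
  have key : ∀ a, p a - q a ≤ p a * Real.log (p a / q a) := by
    intro a
    have h1 : Real.log (q a / p a) ≤ q a / p a - 1 :=
      Real.log_le_sub_one_of_pos (div_pos (hq a) (hp a))
    have h4 := mul_le_mul_of_nonneg_left h1 (hp a).le
    rw [h2, mul_neg, h3] at h4
    linarith
  have hsum : ∑ a, (p a - q a) ≤ ∑ a, p a * Real.log (p a / q a) :=
    Finset.sum_le_sum fun a _ => key a
  rw [Finset.sum_sub_distrib, hps, hqs, sub_self] at hsum
  refine ⟨hsum, fun hF a => ?_⟩
  by_contra hne
  have hne1 : q a / p a ≠ 1 := by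
    intro h; exact hne (div_eq_one_iff_eq (hp a).ne' |>.mp h)
  have h1 : Real.log (q a / p a) < q a / p a - 1 :=
    Real.log_lt_sub_one_of_pos (div_pos (hq a) (hp a)) hne1
  have h4 := mul_lt_mul_of_pos_left h1 (hp a)
  rw [h2, mul_neg, h3] at h4
  have hstrict : p a - q a < p a * Real.log (p a / q a) := by linarith
  have hsum2 : ∑ b, (p b - q b) < ∑ b, p b * Real.log (p b / q b) :=
    Finset.sum_lt_sum (fun b _ => key b) ⟨a, Finset.mem_univ a, hstrict⟩
  rw [Finset.sum_sub_distrib, hps, hqs, sub_self, hF] at hsum2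
  exact lt_irrefl 0 hsum2

lemma R_inj (n : ℕ) (r : Fin n → Bool → Bool → ℝ)
    (hsum : ∀ k z, r k false z + r k true z = 1)
    (hneq : ∀ k, r k true false ≠ r k true true)
    (ν : (Fin n → Bool) → ℝ)
    (h : ∀ a : Fin n → Bool, ∑ z : Fin n → Bool, (∏ k : Fin n, r k (a k) (z k)) * ν z = 0) :
    ∀ z, ν z = 0 := by
  set D : Fin n → ℝ := fun k =>
    r k false false * r k true true - r k false true * r k true false with hD
  have hD0 : ∀ k, D k ≠ 0 := by
    intro k
    have e0 := hsum k false
    have e1 := hsum k true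
    have : D k = r k true true - r k true false := by
      show r k false false * r k true true - r k false true * r k true false
          = r k true true - r k true false
      linear_combination r k true true * e0 - r k true false * e1
    rw [this]
    exact sub_ne_zero.mpr (Ne.symm (hneq k))
  set s : Fin n → Bool → Bool → ℝ := fun k z b =>
    (cond z (cond b (r k false false) (-(r k true false)))
            (cond b (-(r k false true)) (r k true true))) / D k with hs
  have horth : ∀ k (z z' : Bool), (∑ b : Bool, s k z b * r k b z') = if z = z' then 1 else 0 := by
    intro k z z'
    have hk := hD0 k
    cases z <;> cases z' <;>
      · simp only [Fintype.sum_bool, hs, cond, if_true, if_false, reduceIte, Bool.false_eq_true, Bool.true_eq_false]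
        field_simp
        ring
  intro z0
  have step1 : ν z0 = ∑ z : Fin n → Bool, (if z0 = z then (1:ℝ) else 0) * ν z := by
    simp [ite_mul]
  rw [step1]
  have step2 : ∀ z : Fin n → Bool,
      (if z0 = z then (1:ℝ) else 0) = ∏ k : Fin n, ∑ b : Bool, s k (z0 k) b * r k b (z k) := by
    intro z
    have h1 : (∏ k : Fin n, ∑ b : Bool, s k (z0 k) b * r k b (z k))
        = ∏ k : Fin n, (if z0 k = z k then (1:ℝ) else 0) :=
      Finset.prod_congr rfl fun k _ => horth k (z0 k) (z k)
    rw [h1, Finset.prod_boole]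
    congr 1
    simp [funext_iff]
  have step3 : ∀ z : Fin n → Bool,
      (∏ k : Fin n, ∑ b : Bool, s k (z0 k) b * r k b (z k))
        = ∑ a : Fin n → Bool, (∏ k : Fin n, s k (z0 k) (a k)) * ∏ k : Fin n, r k (a k) (z k) := by
    intro z
    rw [Finset.prod_univ_sum (fun _ => (Finset.univ : Finset Bool))
      (fun k b => s k (z0 k) b * r k b (z k))]
    rw [Fintype.piFinset_univ]
    exact Finset.sum_congr rfl fun a _ => Finset.prod_mul_distrib
  calc ∑ z : Fin n → Bool, (if z0 = z then (1:ℝ) else 0) * ν z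
      = ∑ z : Fin n → Bool, (∑ a : Fin n → Bool,
          (∏ k : Fin n, s k (z0 k) (a k)) * ∏ k : Fin n, r k (a k) (z k)) * ν z := by
        refine Finset.sum_congr rfl fun z _ => ?_
        rw [step2 z, step3 z]
    _ = ∑ a : Fin n → Bool, (∏ k : Fin n, s k (z0 k) (a k)) *
          ∑ z : Fin n → Bool, (∏ k : Fin n, r k (a k) (z k)) * ν z := by
        simp only [Finset.sum_mul]
        rw [Finset.sum_comm]
        simp only [mul_assoc, ← Finset.mul_sum]
    _ = 0 := by simp [h]

/-- The population-level KL moment-recovery objective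
`F(μ) = D_KL(Rμ* ∥ Rμ)` is nonnegative over the simplex and vanishes exactly
at `μ = μ*`; hence `μ*` is its unique minimizer. -/
theorem kl_moment_recovery_unique_minimizer (n : ℕ) (hn : 1 ≤ n)
    (r : Fin n → Bool → Bool → ℝ)
    (hr : ∀ k a z, 0 < r k a z ∧ r k a z < 1)
    (hsum : ∀ k z, r k false z + r k true z = 1)
    (hneq : ∀ k, r k true false ≠ r k true true)
    (μstar : (Fin n → Bool) → ℝ)
    (hμs0 : ∀ z, 0 ≤ μstar z) (hμs1 : ∑ z : Fin n → Bool, μstar z = 1) :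
    ∀ μ : (Fin n → Bool) → ℝ, (∀ z, 0 ≤ μ z) → (∑ z : Fin n → Bool, μ z = 1) →
      (0 ≤ ∑ a : Fin n → Bool,
          (∑ z : Fin n → Bool, (∏ k : Fin n, r k (a k) (z k)) * μstar z) *
            Real.log
              ((∑ z : Fin n → Bool, (∏ k : Fin n, r k (a k) (z k)) * μstar z) /
                (∑ z : Fin n → Bool, (∏ k : Fin n, r k (a k) (z k)) * μ z))) ∧
      ((∑ a : Fin n → Bool,
          (∑ z : Fin n → Bool, (∏ k : Fin n, r k (a k) (z k)) * μstar z) *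
            Real.log
              ((∑ z : Fin n → Bool, (∏ k : Fin n, r k (a k) (z k)) * μstar z) /
                (∑ z : Fin n → Bool, (∏ k : Fin n, r k (a k) (z k)) * μ z))) = 0 ↔
        μ = μstar) := by
  -- abbreviation and basic facts
  set q : ((Fin n → Bool) → ℝ) → (Fin n → Bool) → ℝ :=
    fun μ a => ∑ z : Fin n → Bool, (∏ k : Fin n, r k (a k) (z k)) * μ z with hq
  have hMpos : ∀ (a z : Fin n → Bool), 0 < ∏ k : Fin n, r k (a k) (z k) :=
    fun a z => Finset.prod_pos fun k _ => (hr k (a k) (z k)).1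
  have hqpos : ∀ (μ : (Fin n → Bool) → ℝ), (∀ z, 0 ≤ μ z) →
      (∑ z : Fin n → Bool, μ z = 1) → ∀ a, 0 < q μ a := by
    intro μ h0 h1 a
    obtain ⟨z1, hz1⟩ : ∃ z1, 0 < μ z1 := by
      by_contra hc
      push_neg at hc
      have : ∀ z : Fin n → Bool, μ z = 0 := fun z => le_antisymm (hc z) (h0 z)
      simp [this] at h1
    exact Finset.sum_pos' (fun z _ => mul_nonneg (hMpos a z).le (h0 z))
      ⟨z1, Finset.mem_univ z1, mul_pos (hMpos a z1) hz1⟩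
  have hqsum : ∀ (μ : (Fin n → Bool) → ℝ), (∑ z : Fin n → Bool, μ z = 1) →
      ∑ a : Fin n → Bool, q μ a = 1 := by
    intro μ h1
    have hcol : ∀ z : Fin n → Bool, ∑ a : Fin n → Bool, ∏ k : Fin n, r k (a k) (z k) = 1 := by
      intro z
      rw [← Fintype.piFinset_univ,
        ← Finset.prod_univ_sum (fun _ => (Finset.univ : Finset Bool)) (fun k b => r k b (z k))]
      simp [Fintype.sum_bool]
      exact Finset.prod_eq_one fun k _ => by rw [add_comm]; exact hsum k (z k)
    simp only [hq]
    rw [Finset.sum_comm]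
    calc ∑ z : Fin n → Bool, ∑ a : Fin n → Bool, (∏ k : Fin n, r k (a k) (z k)) * μ z
        = ∑ z : Fin n → Bool, (∑ a : Fin n → Bool, ∏ k : Fin n, r k (a k) (z k)) * μ z := by
          simp [Finset.sum_mul]
      _ = 1 := by
          rw [Finset.sum_congr rfl fun z _ => by rw [hcol z, one_mul]]
          exact h1
  intro μ hμ0 hμ1
  obtain ⟨hge, heq⟩ := gibbs_aux (q μstar) (q μ) (hqpos μstar hμs0 hμs1)
    (hqpos μ hμ0 hμ1) (hqsum μstar hμs1) (hqsum μ hμ1)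
  refine ⟨hge, ?_, ?_⟩
  · intro hF
    have hqeq : ∀ a, q μ a = q μstar a := heq hF
    have hν : ∀ a : Fin n → Bool,
        ∑ z : Fin n → Bool, (∏ k : Fin n, r k (a k) (z k)) * (μ z - μstar z) = 0 := by
      intro a
      have : ∑ z : Fin n → Bool, (∏ k : Fin n, r k (a k) (z k)) * (μ z - μstar z)
          = q μ a - q μstar a := by
        simp only [hq, mul_sub, Finset.sum_sub_distrib]
      rw [this, hqeq a, sub_self]
    have := R_inj n r hsum hneq (fun z => μ z - μstar z) hν
    funext z
    have hz : μ z - μstar z = 0 := this z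
    linarith
  · intro hμeq
    subst hμeq
    apply Finset.sum_eq_zero
    intro a _
    rw [div_self (hqpos μ hμ0 hμ1 a).ne', Real.log_one, mul_zero]
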